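/- Let p be a prime, let k ⊆ L be a finite extension of fields of characteristic p, and let R = k + xL[[x]] be the subring of the power series ring L[[x]] consisting of the power series whose constant term lies in k. Let a ∈ L with a ∉ k, and set u = a·x. Then the set {c ∈ R : c·u^q ∈ x^q·R for all q = p^e, e ≥ 0} equals x·L[[x]], the maximal ideal of R. In particular, with I = xR one has I(u) = 𝔪, so R is F-stable. -/

import Mathlib

/-- The subring `R = k + xL⟦x⟧` of the power series ring `L⟦x⟧`: power series whose constant
term lies in (the image of) `k`. -/
noncomputable def kPlusXL (k L : Type*) [Field k] [Field L] [Algebra k L] : Subring (PowerSeries L) :=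
  Subring.comap (PowerSeries.constantCoeff (R := L)) (algebraMap k L).range

/-- Let `k ⊆ L` be a finite extension of fields of prime characteristic `p` and
`R = k + xL⟦x⟧`.  For `a ∈ L \ k` and `u = a·x`, the set
`{c ∈ R : c·u^q ∈ x^q·R for all q = p^e}` equals `xL⟦x⟧`, the maximal ideal of `R`
(the set of elements of `R` with zero constant term).  In particular, with `I = xR` one has
`I(u) = 𝔪`, so `R` is F-stable. -/
theorem kPlusXL_fStable
    (p : ℕ) [Fact p.Prime]
    (k L : Type*) [Field k] [Field L] [Algebra k L] [CharP L p] [Module.Finite k L]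
    (a : L) (ha : a ∉ (algebraMap k L).range)
    (u x0 : kPlusXL k L)
    (hu : (u : PowerSeries L) = PowerSeries.C (R := L) a * PowerSeries.X)
    (hx : (x0 : PowerSeries L) = PowerSeries.X) :
    {c : kPlusXL k L | ∀ e : ℕ, c * u ^ p ^ e ∈ Ideal.span {x0 ^ p ^ e}} =
      {c : kPlusXL k L | PowerSeries.constantCoeff (R := L) (c : PowerSeries L) = 0} := by
  ext c
  simp only [Set.mem_setOf_eq]
  constructor
  · intro h
    have h0 := h 0
    rw [pow_zero, pow_one, pow_one, Ideal.mem_span_singleton] at h0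
    obtain ⟨r, hr⟩ := h0
    have hr' : ((c : PowerSeries L) * (PowerSeries.C (R := L) a * PowerSeries.X))
        = PowerSeries.X * (r : PowerSeries L) := by
      rw [← hu, ← hx]
      exact_mod_cast congrArg (Subtype.val) hr
    have hcancel : PowerSeries.C (R := L) a * (c : PowerSeries L) = (r : PowerSeries L) := by
      apply mul_right_cancel₀ (PowerSeries.X_ne_zero (R := L))
      linear_combination hr'
    have hk : a * PowerSeries.constantCoeff (R := L) (c : PowerSeries L) ∈
        (algebraMap k L).range := by
      have := congrArg (PowerSeries.constantCoeff (R := L)) hcancel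
      simp only [map_mul, PowerSeries.constantCoeff_C] at this
      rw [this]
      exact r.2
    by_contra hc0
    apply ha
    obtain ⟨b, hb⟩ := c.2
    obtain ⟨d, hd⟩ := hk
    have hb0 : b ≠ 0 := by
      rintro rfl
      simp only [map_zero] at hb
      exact hc0 hb.symm
    refine ⟨d * b⁻¹, ?_⟩
    rw [map_mul, map_inv₀, hd, hb]
    field_simp
  · intro hc0 e
    rw [Ideal.mem_span_singleton]
    refine ⟨⟨PowerSeries.C (R := L) (a ^ p ^ e) * (c : PowerSeries L), ?_⟩, ?_⟩
    · show PowerSeries.constantCoeff (R := L) _ ∈ (algebraMap k L).range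
      simp [hc0]
    · apply Subtype.ext
      push_cast
      rw [hu, hx, mul_pow, ← map_pow]
      ring
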